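/- For every real number ε > 0, log(2(7ε+6)/(2ε+3)) + ε·log(2ε/(2ε+3)) < log 4; equivalently, (2(7ε+6)/(2ε+3))·(2ε/(2ε+3))^ε < 4. -/
import Mathlib


/-- For every `ε > 0`: `log(2(7ε+6)/(2ε+3)) + ε log(2ε/(2ε+3)) < log 4`;
equivalently `(2(7ε+6)/(2ε+3))(2ε/(2ε+3))^ε < 4`. -/
theorem stmt_14 (ε : ℝ) (hε : 0 < ε) :
    Real.log (2 * (7 * ε + 6) / (2 * ε + 3)) + ε * Real.log (2 * ε / (2 * ε + 3))
        < Real.log 4 ∧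
      2 * (7 * ε + 6) / (2 * ε + 3) * (2 * ε / (2 * ε + 3)) ^ ε < 4 := by
  have h3 : (0:ℝ) < 2 * ε + 3 := by linarith
  set x : ℝ := 2 * ε / (2 * ε + 3) with hxdef
  have hx0 : 0 < x := div_pos (by linarith) h3
  have hx1 : x < 1 := (div_lt_one h3).mpr (by linarith)
  have hA : 2 * (7 * ε + 6) / (2 * ε + 3) = 4 + 3 * x := by
    rw [hxdef]; field_simp; ring
  have hεx : ε * (x - 1) = -(3 * x / 2) := by
    rw [hxdef]; field_simp; ring
  have hA0 : (0:ℝ) < 4 + 3 * x := by linarith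
  -- log x < x - 1
  have hlogx : Real.log x < x - 1 := Real.log_lt_sub_one_of_pos hx0 (ne_of_lt hx1)
  have h1 : ε * Real.log x < -(3 * x / 2) := by
    calc ε * Real.log x < ε * (x - 1) := by
          exact mul_lt_mul_of_pos_left hlogx hε
      _ = -(3 * x / 2) := hεx
  -- log (4 + 3x) ≤ log 4 + 3x/4
  have h2 : Real.log (4 + 3 * x) ≤ Real.log 4 + 3 * x / 4 := by
    have : Real.log ((4 + 3 * x) / 4) ≤ (4 + 3 * x) / 4 - 1 :=
      Real.log_le_sub_one_of_pos (by positivity)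
    rw [Real.log_div (by positivity) (by norm_num)] at this
    linarith
  have hlog : Real.log (2 * (7 * ε + 6) / (2 * ε + 3)) + ε * Real.log x < Real.log 4 := by
    rw [hA]
    have : 3 * x / 4 - 3 * x / 2 < 0 := by linarith
    linarith
  refine ⟨hlog, ?_⟩
  have hpow : (x : ℝ) ^ ε = Real.exp (ε * Real.log x) := by
    rw [Real.rpow_def_of_pos hx0, mul_comm]
  have hprod : 2 * (7 * ε + 6) / (2 * ε + 3) * x ^ ε =
      Real.exp (Real.log (2 * (7 * ε + 6) / (2 * ε + 3)) + ε * Real.log x) := by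
    rw [Real.exp_add, ← hpow, Real.exp_log (by rw [hA]; exact hA0)]
  rw [hprod]
  calc Real.exp (Real.log (2 * (7 * ε + 6) / (2 * ε + 3)) + ε * Real.log x)
      < Real.exp (Real.log 4) := Real.exp_lt_exp.mpr hlog
    _ = 4 := Real.exp_log (by norm_num)
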